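/- arXiv:1303.3596 — 2 statements merged into one kernel-verified Lean document; each statement's English description precedes it below -/
import Mathlib

section
/- The duality Δ_n is the unique order-reversing bijection of the lattice K_n of codes of Enriques diagrams of complexity n onto itself. -/
/-- Symbols of Enriques diagrams: `Sum.inl k` is the vertex `v_k`,
`Sum.inr k` is the edge `e_k`. -/
abbrev ESym : Type := ℕ ⊕ ℕ

def vtx (k : ℕ) : ESym := Sum.inl k
def edg (k : ℕ) : ESym := Sum.inr k

/-- The set `S_n = {v_2,…,v_{n-2}, e_2,…,e_{n-2}}` of undetermined symbols. -/
def symbols (n : ℕ) : Finset ESym :=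
  ((Finset.Icc 2 (n - 2)).image vtx) ∪ ((Finset.Icc 2 (n - 2)).image edg)

/-- A code of an Enriques diagram of complexity `n`: a subset `χ ⊆ S_n` such that
`v_i ∈ χ` implies `e_i ∈ χ` and (`e_{i+1} ∈ χ` or `i = n-2`). -/
def IsCode (n : ℕ) (χ : Finset ESym) : Prop :=
  χ ⊆ symbols n ∧
    ∀ i ∈ Finset.Icc 2 (n - 2), vtx i ∈ χ →
      edg i ∈ χ ∧ (edg (i + 1) ∈ χ ∨ i = n - 2)

instance (n : ℕ) : DecidablePred (IsCode n) := fun χ => by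
  unfold IsCode; infer_instance

/-- The duality `Δ_n` on codes: `v_k ∈ Δ_n(χ)` iff `e_{n-k} ∉ χ`, and
`e_k ∈ Δ_n(χ)` iff `v_{n-k} ∉ χ` (for `k ∈ {2,…,n-2}`). -/
def dual (n : ℕ) (χ : Finset ESym) : Finset ESym :=
  ((Finset.Icc 2 (n - 2)).filter (fun k => edg (n - k) ∉ χ)).image vtx ∪
  ((Finset.Icc 2 (n - 2)).filter (fun k => vtx (n - k) ∉ χ)).image edg

open Finset

lemma vtx_mem_symbols {n k : ℕ} : vtx k ∈ symbols n ↔ k ∈ Icc 2 (n-2) := by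
  simp [symbols, vtx, edg]

lemma edg_mem_symbols {n k : ℕ} : edg k ∈ symbols n ↔ k ∈ Icc 2 (n-2) := by
  simp [symbols, vtx, edg]

lemma vtx_mem_dual {n k : ℕ} {χ : Finset ESym} :
    vtx k ∈ dual n χ ↔ k ∈ Icc 2 (n-2) ∧ edg (n - k) ∉ χ := by
  simp only [dual, mem_union, mem_image, mem_filter]
  simp [vtx, edg]

lemma edg_mem_dual {n k : ℕ} {χ : Finset ESym} :
    edg k ∈ dual n χ ↔ k ∈ Icc 2 (n-2) ∧ vtx (n - k) ∉ χ := by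
  simp only [dual, mem_union, mem_image, mem_filter]
  simp [vtx, edg]

lemma isCode_dual {n : ℕ} (hn : 3 ≤ n) {χ : Finset ESym} (h : IsCode n χ) :
    IsCode n (dual n χ) := by
  constructor
  · intro x hx
    rcases x with k | k
    · exact vtx_mem_symbols.2 (vtx_mem_dual.1 hx).1
    · exact edg_mem_symbols.2 (edg_mem_dual.1 hx).1
  · intro i hi hv
    rw [vtx_mem_dual] at hv
    simp only [mem_Icc] at hi
    constructor
    · rw [edg_mem_dual]
      refine ⟨mem_Icc.2 hi, fun hc => hv.2 ((h.2 (n-i) (by simp [mem_Icc]; omega) hc).1)⟩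
    · by_cases hne : i = n - 2
      · exact Or.inr hne
      · left
        rw [edg_mem_dual]
        refine ⟨mem_Icc.2 ⟨by omega, by omega⟩, fun hc => ?_⟩
        have := h.2 (n - (i+1)) (by simp [mem_Icc]; omega) hc
        have hni : n - (i+1) + 1 = n - i := by omega
        rw [hni] at this
        rcases this.2 with h1 | h1
        · exact hv.2 h1
        · omega

lemma dual_dual {n : ℕ} (hn : 3 ≤ n) {χ : Finset ESym} (hs : χ ⊆ symbols n) :
    dual n (dual n χ) = χ := by
  ext x
  rcases x with k | k
  · rw [show (Sum.inl k : ESym) = vtx k from rfl, vtx_mem_dual]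
    constructor
    · rintro ⟨hk, he⟩
      rw [edg_mem_dual] at he
      simp only [mem_Icc] at hk
      push_neg at he
      have := he (by simp [mem_Icc]; omega)
      rwa [show n - (n - k) = k by omega] at this
    · intro hx
      have hk := vtx_mem_symbols.1 (hs hx)
      simp only [mem_Icc] at hk
      refine ⟨mem_Icc.2 hk, fun hc => ?_⟩
      rw [edg_mem_dual] at hc
      rw [show n - (n - k) = k by omega] at hc
      exact hc.2 hx
  · rw [show (Sum.inr k : ESym) = edg k from rfl, edg_mem_dual]
    constructor
    · rintro ⟨hk, he⟩
      rw [vtx_mem_dual] at he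
      simp only [mem_Icc] at hk
      push_neg at he
      have := he (by simp [mem_Icc]; omega)
      rwa [show n - (n - k) = k by omega] at this
    · intro hx
      have hk := edg_mem_symbols.1 (hs hx)
      simp only [mem_Icc] at hk
      refine ⟨mem_Icc.2 hk, fun hc => ?_⟩
      rw [vtx_mem_dual] at hc
      rw [show n - (n - k) = k by omega] at hc
      exact hc.2 hx

lemma dual_anti {n : ℕ} {χ ψ : Finset ESym} (h : χ ⊆ ψ) : dual n ψ ⊆ dual n χ := by
  intro x hx
  rcases x with k | k
  · rw [show (Sum.inl k : ESym) = vtx k from rfl, vtx_mem_dual] at *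
    exact ⟨hx.1, fun hc => hx.2 (h hc)⟩
  · rw [show (Sum.inr k : ESym) = edg k from rfl, edg_mem_dual] at *
    exact ⟨hx.1, fun hc => hx.2 (h hc)⟩

lemma isCode_empty (n : ℕ) : IsCode n ∅ := by
  constructor
  · simp
  · simp [vtx]

lemma isCode_union {n : ℕ} {χ ψ : Finset ESym} (hχ : IsCode n χ) (hψ : IsCode n ψ) :
    IsCode n (χ ∪ ψ) := by
  constructor
  · exact union_subset hχ.1 hψ.1
  · intro i hi hv
    rcases mem_union.1 hv with h | h
    · have := hχ.2 i hi h
      exact ⟨mem_union.2 (Or.inl this.1), this.2.imp (fun h => mem_union.2 (Or.inl h)) id⟩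
    · have := hψ.2 i hi h
      exact ⟨mem_union.2 (Or.inr this.1), this.2.imp (fun h => mem_union.2 (Or.inr h)) id⟩

/-- The atom `{e_k}`. -/
def Ak (k : ℕ) : Finset ESym := {edg k}

/-- The join-irreducible generated by `v_k`. -/
def Bk (n k : ℕ) : Finset ESym :=
  if k = n - 2 then {vtx k, edg k} else {vtx k, edg k, edg (k+1)}

lemma isCode_Ak {n k : ℕ} (hk : k ∈ Icc 2 (n-2)) : IsCode n (Ak k) := by
  constructor
  · intro x hx; simp [Ak] at hx; subst hx; exact edg_mem_symbols.2 hk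
  · intro i _ hv; simp [Ak, vtx, edg] at hv

lemma isCode_Bk {n k : ℕ} (hk : k ∈ Icc 2 (n-2)) : IsCode n (Bk n k) := by
  simp only [mem_Icc] at hk
  constructor
  · intro x hx
    by_cases h : k = n - 2 <;> simp [Bk, h] at hx <;>
      rcases hx with hx | hx <;> try subst hx
    · exact vtx_mem_symbols.2 (by simp [mem_Icc]; omega)
    · exact edg_mem_symbols.2 (by simp [mem_Icc]; omega)
    · exact vtx_mem_symbols.2 (by simp [mem_Icc]; omega)
    · rcases hx with hx | hx <;> subst hx
      · exact edg_mem_symbols.2 (by simp [mem_Icc]; omega)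
      · exact edg_mem_symbols.2 (by simp [mem_Icc]; omega)
  · intro i hi hv
    by_cases h : k = n - 2 <;> simp [Bk, h, vtx, edg] at hv ⊢ <;> subst hv
    · simp
    · exact ⟨Or.inl rfl, Or.inl (Or.inr rfl)⟩

lemma vtx_mem_Bk {n k : ℕ} : vtx k ∈ Bk n k := by
  by_cases h : k = n - 2 <;> simp [Bk, h]

lemma edg_mem_iff_Ak {n k : ℕ} {χ : Finset ESym} (hχ : IsCode n χ) :
    edg k ∈ χ ↔ k ∈ Icc 2 (n-2) ∧ Ak k ⊆ χ := by
  constructor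
  · intro h
    exact ⟨edg_mem_symbols.1 (hχ.1 h), by simpa [Ak] using h⟩
  · rintro ⟨-, h⟩; exact h (by simp [Ak])

lemma vtx_mem_iff_Bk {n k : ℕ} {χ : Finset ESym} (hχ : IsCode n χ) :
    vtx k ∈ χ ↔ k ∈ Icc 2 (n-2) ∧ Bk n k ⊆ χ := by
  constructor
  · intro h
    have hk := vtx_mem_symbols.1 (hχ.1 h)
    refine ⟨hk, ?_⟩
    have hc := hχ.2 k hk h
    by_cases hne : k = n - 2
    · simp only [Bk, if_pos hne]
      intro x hx; simp at hx; rcases hx with hx | hx <;> subst hx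
      · exact h
      · exact hc.1
    · simp only [Bk, if_neg hne]
      intro x hx; simp at hx; rcases hx with hx | hx | hx <;> subst hx
      · exact h
      · exact hc.1
      · exact hc.2.resolve_right hne
  · rintro ⟨-, h⟩; exact h vtx_mem_Bk

lemma Ak_subset_Bk_iff {n j k : ℕ} (hk : k ∈ Icc 2 (n-2)) :
    Ak j ⊆ Bk n k ↔ (j = k ∨ (j = k + 1 ∧ k ≠ n - 2)) := by
  simp only [mem_Icc] at hk
  by_cases h : k = n - 2 <;> simp [Ak, Bk, h, vtx, edg, singleton_subset_iff] <;> omega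

abbrev Code (n : ℕ) := {χ : Finset ESym // IsCode n χ}

instance instFintypeCode (n : ℕ) : Fintype (Code n) :=
  Fintype.subtype ((symbols n).powerset.filter (IsCode n)) (by
    intro χ
    simp only [Finset.mem_filter, Finset.mem_powerset]
    exact ⟨fun h => h.2, fun h => ⟨h.1, h⟩⟩)

lemma mono_bij_le {α : Type*} [PartialOrder α] [Finite α] {g : α → α}
    (hb : Function.Bijective g) (hm : Monotone g) {a b : α} (h : g a ≤ g b) : a ≤ b := by
  let σ : Equiv.Perm α := Equiv.ofBijective g hb
  have hcoe : ⇑σ = g := rfl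
  have hmono : ∀ k : ℕ, Monotone ⇑(σ ^ k) := by
    intro k
    induction k with
    | zero => simpa using monotone_id
    | succ k ih =>
      have hc : ⇑(σ ^ (k+1)) = ⇑(σ ^ k) ∘ ⇑σ := by
        ext x; simp [pow_succ, Equiv.Perm.mul_apply]
      rw [hc, hcoe]
      exact ih.comp hm
  have hpos : 0 < orderOf σ := orderOf_pos σ
  have h3 : ∀ x, (σ ^ (orderOf σ - 1)) (σ x) = x := by
    intro x
    have h4 : (σ ^ (orderOf σ - 1)) (σ x) = (σ ^ (orderOf σ - 1) * σ) x := rfl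
    rw [h4, ← pow_succ, Nat.sub_add_cancel hpos, pow_orderOf_eq_one]
    rfl
  have h2 := hmono (orderOf σ - 1) (show σ a ≤ σ b from h)
  simpa only [h3] using h2

/-- Atom predicate on codes. -/
def IsAtomC (n : ℕ) (χ : Code n) : Prop :=
  χ.1 ≠ ∅ ∧ ∀ ψ : Code n, ψ.1 ⊆ χ.1 → ψ.1 = ∅ ∨ ψ = χ

/-- Join-irreducibility predicate on codes. -/
def JirrC (n : ℕ) (χ : Code n) : Prop :=
  χ.1 ≠ ∅ ∧ ∀ a b : Code n, a.1 ∪ b.1 = χ.1 → a = χ ∨ b = χ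

lemma vtx_mem_Bk_iff {n k j : ℕ} : vtx j ∈ Bk n k ↔ j = k := by
  by_cases h : k = n - 2 <;> simp [Bk, h, vtx, edg]

lemma isAtomC_iff {n : ℕ} (χ : Code n) :
    IsAtomC n χ ↔ ∃ k ∈ Icc 2 (n-2), χ.1 = Ak k := by
  constructor
  · rintro ⟨hne, hmin⟩
    obtain ⟨x, hx⟩ := Finset.nonempty_iff_ne_empty.2 hne
    have hAk : ∀ k, edg k ∈ χ.1 → ∃ k ∈ Icc 2 (n-2), χ.1 = Ak k := by
      intro k hk
      have hkI : k ∈ Icc 2 (n-2) := edg_mem_symbols.1 (χ.2.1 hk)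
      have hsub : (Ak k) ⊆ χ.1 := by simpa [Ak] using hk
      rcases hmin ⟨Ak k, isCode_Ak hkI⟩ hsub with h | h
      · simp [Ak] at h
      · exact ⟨k, hkI, by rw [← h]⟩
    rcases x with k | k
    · have hkI : k ∈ Icc 2 (n-2) := vtx_mem_symbols.1 (χ.2.1 hx)
      exact hAk k (χ.2.2 k hkI hx).1
    · exact hAk k hx
  · rintro ⟨k, hk, hχ⟩
    refine ⟨by simp [hχ, Ak], fun ψ hψ => ?_⟩
    rw [hχ] at hψ
    rcases Finset.subset_singleton_iff.1 (by simpa [Ak] using hψ) with h | h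
    · exact Or.inl h
    · exact Or.inr (Subtype.ext (by rw [h, hχ]; rfl))

/-- The join-irreducible code generated by a symbol. -/
def gen (n : ℕ) : ESym → Finset ESym
  | Sum.inl k => Bk n k
  | Sum.inr k => Ak k

lemma isCode_sup {n : ℕ} (s : Finset ESym) (F : ESym → Finset ESym)
    (h : ∀ x ∈ s, IsCode n (F x)) : IsCode n (s.sup F) := by
  induction s using Finset.induction_on with
  | empty => simpa using isCode_empty n
  | insert _ _ hni ih =>
    rw [Finset.sup_insert, sup_eq_union]
    exact isCode_union (h _ (mem_insert_self _ _))
      (ih fun x hx => h x (mem_insert_of_mem hx))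

lemma gen_code {n : ℕ} {χ : Code n} {x : ESym} (hx : x ∈ χ.1) : IsCode n (gen n x) := by
  rcases x with k | k
  · exact isCode_Bk (vtx_mem_symbols.1 (χ.2.1 hx))
  · exact isCode_Ak (edg_mem_symbols.1 (χ.2.1 hx))

lemma gen_subset {n : ℕ} {χ : Code n} {x : ESym} (hx : x ∈ χ.1) : gen n x ⊆ χ.1 := by
  rcases x with k | k
  · exact ((vtx_mem_iff_Bk χ.2).1 hx).2
  · exact ((edg_mem_iff_Ak χ.2).1 hx).2

lemma self_mem_gen {n : ℕ} (x : ESym) : x ∈ gen n x := by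
  rcases x with k | k
  · exact vtx_mem_Bk
  · simp [gen, Ak, edg]

lemma code_eq_sup_gen {n : ℕ} (χ : Code n) : χ.1 = χ.1.sup (gen n) := by
  apply Finset.Subset.antisymm
  · intro x hx
    exact (Finset.le_sup (f := gen n) hx : gen n x ⊆ χ.1.sup (gen n)) (self_mem_gen x)
  · exact Finset.sup_le fun x hx => gen_subset hx

lemma jirr_classify {n : ℕ} {χ : Code n} (hj : JirrC n χ) :
    ∃ x ∈ χ.1, χ.1 = gen n x := by
  have key : ∀ s : Finset ESym, s ⊆ χ.1 → s.sup (gen n) = χ.1 → ∃ x ∈ s, χ.1 = gen n x := by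
    intro s
    induction s using Finset.induction_on with
    | empty =>
      intro _ h
      simp at h
      exact absurd h.symm hj.1
    | @insert a s hni ih =>
      intro hsub hsup
      rw [Finset.sup_insert, sup_eq_union] at hsup
      have ha : a ∈ χ.1 := hsub (mem_insert_self _ _)
      have hs : s ⊆ χ.1 := fun x hx => hsub (mem_insert_of_mem hx)
      have hcode : IsCode n (s.sup (gen n)) :=
        isCode_sup s _ fun x hx => gen_code (χ := χ) (hs hx)
      rcases hj.2 ⟨gen n a, gen_code ha⟩ ⟨s.sup (gen n), hcode⟩ hsup with h | h
      · exact ⟨a, mem_insert_self _ _, by rw [← congrArg Subtype.val h]⟩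
      · obtain ⟨x, hx, hgx⟩ := ih hs (congrArg Subtype.val h)
        exact ⟨x, mem_insert_of_mem hx, hgx⟩
  exact key χ.1 Finset.Subset.rfl (code_eq_sup_gen χ).symm

lemma jirr_Bk {n : ℕ} {k : ℕ} (hk : k ∈ Icc 2 (n-2)) :
    JirrC n ⟨Bk n k, isCode_Bk hk⟩ := by
  refine ⟨by simp [Bk]; by_cases h : k = n-2 <;> simp [h], ?_⟩
  intro a b hab
  have hv : vtx k ∈ a.1 ∪ b.1 := by rw [hab]; exact vtx_mem_Bk
  have haux : ∀ c : Code n, c.1 ⊆ Bk n k → vtx k ∈ c.1 → c = ⟨Bk n k, isCode_Bk hk⟩ := by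
    intro c hc hvc
    refine Subtype.ext (Finset.Subset.antisymm hc ?_)
    exact ((vtx_mem_iff_Bk c.2).1 hvc).2
  have hab' : a.1 ∪ b.1 = Bk n k := hab
  rcases Finset.mem_union.1 hv with h | h
  · exact Or.inl (haux a (hab' ▸ Finset.subset_union_left) h)
  · exact Or.inr (haux b (hab' ▸ Finset.subset_union_right) h)

lemma not_atom_Bk {n : ℕ} {k : ℕ} (hk : k ∈ Icc 2 (n-2)) :
    ¬ IsAtomC n ⟨Bk n k, isCode_Bk hk⟩ := by
  rintro ⟨-, hmin⟩
  have hsub : Ak k ⊆ Bk n k := (Ak_subset_Bk_iff hk).2 (Or.inl rfl)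
  rcases hmin ⟨Ak k, isCode_Ak hk⟩ hsub with h | h
  · simp [Ak] at h
  · have h' : Ak k = Bk n k := congrArg Subtype.val h
    have : vtx k ∈ Ak k := h'.symm ▸ vtx_mem_Bk
    simp [Ak, vtx, edg] at this

lemma Ak_injective : Function.Injective Ak := by
  intro a b h
  simpa [Ak, edg] using h

lemma Bk_inj {n k k' : ℕ} (h : Bk n k = Bk n k') : k = k' :=
  vtx_mem_Bk_iff.1 (h ▸ (vtx_mem_Bk (n := n) (k := k)))

lemma auto_id {n : ℕ} (g : Code n → Code n) (hb : Function.Bijective g)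
    (hm : ∀ a b : Code n, a.1 ⊆ b.1 → (g a).1 ⊆ (g b).1) : ∀ χ, g χ = χ := by
  have hmono : Monotone g := fun a b hab => hm a b hab
  have hsub : ∀ a b : Code n, (g a).1 ⊆ (g b).1 ↔ a.1 ⊆ b.1 :=
    fun a b => ⟨fun h => mono_bij_le hb hmono (show g a ≤ g b from h), fun h => hm a b h⟩
  have hbot : g ⟨∅, isCode_empty n⟩ = ⟨∅, isCode_empty n⟩ := by
    obtain ⟨c, hc⟩ := hb.2 (⟨∅, isCode_empty n⟩ : Code n)
    have h1 := hm ⟨∅, isCode_empty n⟩ c (empty_subset _)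
    rw [hc] at h1
    exact Subtype.ext (subset_empty.mp h1)
  have hatom : ∀ χ, IsAtomC n χ → IsAtomC n (g χ) := by
    rintro χ ⟨hne, hmin⟩
    constructor
    · intro h
      apply hne
      have h2 : g χ = g ⟨∅, isCode_empty n⟩ := by rw [hbot]; exact Subtype.ext h
      exact congrArg Subtype.val (hb.1 h2)
    · intro ψ hψ
      obtain ⟨c, rfl⟩ := hb.2 ψ
      rcases hmin c ((hsub c χ).1 hψ) with h | h
      · left
        have h2 : c = ⟨∅, isCode_empty n⟩ := Subtype.ext h
        rw [h2, hbot]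
      · right; rw [h]
  have hnotatom : ∀ χ : Code n, χ.1 ≠ ∅ → ¬ IsAtomC n χ → ¬ IsAtomC n (g χ) := by
    intro χ hne hna hga
    apply hna
    refine ⟨hne, fun ψ hψ => ?_⟩
    rcases hga.2 (g ψ) (hm ψ χ hψ) with h | h
    · by_cases h0 : ψ.1 = ∅
      · exact Or.inl h0
      · exfalso
        apply h0
        have h2 : g ψ = g ⟨∅, isCode_empty n⟩ := by rw [hbot]; exact Subtype.ext h
        exact congrArg Subtype.val (hb.1 h2)
    · exact Or.inr (hb.1 h)
  have hgsup : ∀ a b : Code n,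
      (g ⟨a.1 ∪ b.1, isCode_union a.2 b.2⟩).1 = (g a).1 ∪ (g b).1 := by
    intro a b
    apply Finset.Subset.antisymm
    · obtain ⟨c, hc⟩ := hb.2 (⟨(g a).1 ∪ (g b).1, isCode_union (g a).2 (g b).2⟩ : Code n)
      have h1 : (g a).1 ⊆ (g c).1 := by rw [hc]; exact subset_union_left
      have h2 : (g b).1 ⊆ (g c).1 := by rw [hc]; exact subset_union_right
      have h3 : a.1 ∪ b.1 ⊆ c.1 := union_subset ((hsub a c).1 h1) ((hsub b c).1 h2)
      have h4 := hm ⟨a.1 ∪ b.1, isCode_union a.2 b.2⟩ c h3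
      rw [hc] at h4
      exact h4
    · exact union_subset (hm a _ subset_union_left) (hm b _ subset_union_right)
  have hjirr : ∀ χ, JirrC n χ → JirrC n (g χ) := by
    rintro χ ⟨hne, hj⟩
    constructor
    · intro h
      apply hne
      have h2 : g χ = g ⟨∅, isCode_empty n⟩ := by rw [hbot]; exact Subtype.ext h
      exact congrArg Subtype.val (hb.1 h2)
    · intro a b hab
      obtain ⟨a', rfl⟩ := hb.2 a
      obtain ⟨b', rfl⟩ := hb.2 b
      have h1 : (g ⟨a'.1 ∪ b'.1, isCode_union a'.2 b'.2⟩).1 = (g χ).1 := by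
        rw [hgsup]; exact hab
      have he : (⟨a'.1 ∪ b'.1, isCode_union a'.2 b'.2⟩ : Code n) = χ := hb.1 (Subtype.ext h1)
      rcases hj a' b' (congrArg Subtype.val he) with h | h
      · exact Or.inl (by rw [h])
      · exact Or.inr (by rw [h])
  -- g permutes the atoms A_k
  have hAmap : ∀ k, ∀ hk : k ∈ Icc 2 (n-2), ∃ k',
      k' ∈ Icc 2 (n-2) ∧ (g ⟨Ak k, isCode_Ak hk⟩).1 = Ak k' := by
    intro k hk
    have h1 : IsAtomC n ⟨Ak k, isCode_Ak hk⟩ := (isAtomC_iff _).2 ⟨k, hk, rfl⟩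
    obtain ⟨k', hk', he⟩ := (isAtomC_iff _).1 (hatom _ h1)
    exact ⟨k', hk', he⟩
  -- g permutes the join-irreducibles B_k
  have hBmap : ∀ k, ∀ hk : k ∈ Icc 2 (n-2), ∃ k',
      k' ∈ Icc 2 (n-2) ∧ (g ⟨Bk n k, isCode_Bk hk⟩).1 = Bk n k' := by
    intro k hk
    have hne : (Bk n k : Finset ESym) ≠ ∅ := by
      intro h
      have := vtx_mem_Bk (n := n) (k := k)
      rw [h] at this
      simp at this
    have h1 := hjirr _ (jirr_Bk hk)
    have h2 := hnotatom _ hne (not_atom_Bk hk)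
    obtain ⟨x, hx, he⟩ := jirr_classify h1
    rcases x with k' | k'
    · exact ⟨k', vtx_mem_symbols.1 ((g _).2.1 hx), he⟩
    · exfalso
      apply h2
      refine (isAtomC_iff _).2 ⟨k', edg_mem_symbols.1 ((g _).2.1 hx), he⟩
  choose σ hσI hσE using hAmap
  choose τ hτI hτE using hBmap
  have hστ : ∀ j, ∀ hj : j ∈ Icc 2 (n-2), ∀ k, ∀ hk : k ∈ Icc 2 (n-2),
      Ak j ⊆ Bk n k ↔ Ak (σ j hj) ⊆ Bk n (τ k hk) := by
    intro j hj k hk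
    rw [← hσE j hj, ← hτE k hk]
    exact (hsub ⟨Ak j, isCode_Ak hj⟩ ⟨Bk n k, isCode_Bk hk⟩).symm
  have σinj : ∀ j hj j' hj', σ j hj = σ j' hj' → j = j' := by
    intro j hj j' hj' h
    have h1 : (g ⟨Ak j, isCode_Ak hj⟩).1 = (g ⟨Ak j', isCode_Ak hj'⟩).1 := by
      rw [hσE j hj, hσE j' hj', h]
    have h2 := hb.1 (Subtype.ext h1)
    exact Ak_injective (congrArg Subtype.val h2)
  have τinj : ∀ k hk k' hk', τ k hk = τ k' hk' → k = k' := by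
    intro k hk k' hk' h
    have h1 : (g ⟨Bk n k, isCode_Bk hk⟩).1 = (g ⟨Bk n k', isCode_Bk hk'⟩).1 := by
      rw [hτE k hk, hτE k' hk', h]
    have h2 := hb.1 (Subtype.ext h1)
    exact Bk_inj (congrArg Subtype.val h2)
  have σsurj : ∀ m ∈ Icc 2 (n-2), ∃ j, ∃ hj : j ∈ Icc 2 (n-2), m = σ j hj :=
    Finset.surj_on_of_inj_on_of_card_le σ hσI
      (fun a₁ a₂ ha₁ ha₂ h => σinj a₁ ha₁ a₂ ha₂ h) le_rfl
  -- the fence is rigid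
  have hbase : ∀ k, ∀ hk : k ∈ Icc 2 (n-2), k = n - 2 → τ k hk = k ∧ σ k hk = k := by
    intro k hk hke
    have hτk : τ k hk = k := by
      by_contra hne
      have hmI : τ k hk ∈ Icc 2 (n-2) := hτI k hk
      have hmne : τ k hk ≠ n - 2 := fun h => hne (h.trans hke.symm)
      have h1 : Ak (τ k hk) ⊆ Bk n (τ k hk) := (Ak_subset_Bk_iff hmI).2 (Or.inl rfl)
      have h2 : Ak (τ k hk + 1) ⊆ Bk n (τ k hk) :=
        (Ak_subset_Bk_iff hmI).2 (Or.inr ⟨rfl, hmne⟩)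
      have hm1I : τ k hk + 1 ∈ Icc 2 (n-2) := by
        simp only [mem_Icc] at hmI ⊢
        omega
      obtain ⟨j1, hj1, hj1e⟩ := σsurj (τ k hk) hmI
      obtain ⟨j2, hj2, hj2e⟩ := σsurj (τ k hk + 1) hm1I
      have e1 : j1 = n - 2 := by
        have h3 := (hστ j1 hj1 k hk).2 (by rw [← hj1e]; exact h1)
        rcases (Ak_subset_Bk_iff hk).1 h3 with h | h
        · exact h.trans hke
        · exact absurd hke h.2
      have e2 : j2 = n - 2 := by
        have h3 := (hστ j2 hj2 k hk).2 (by rw [← hj2e]; exact h2)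
        rcases (Ak_subset_Bk_iff hk).1 h3 with h | h
        · exact h.trans hke
        · exact absurd hke h.2
      have : j1 = j2 → False := by
        intro h
        subst h
        rw [← hj1e] at hj2e
        omega
      exact this (e1.trans e2.symm)
    refine ⟨hτk, ?_⟩
    have h1 : Ak k ⊆ Bk n k := (Ak_subset_Bk_iff hk).2 (Or.inl rfl)
    have h2 := (hστ k hk k hk).1 h1
    rw [hτk] at h2
    rcases (Ak_subset_Bk_iff hk).1 h2 with h | h
    · exact h
    · exact absurd hke h.2
  have hstep : ∀ k, ∀ hk : k ∈ Icc 2 (n-2), k ≠ n - 2 → ∀ hk1 : k + 1 ∈ Icc 2 (n-2),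
      (τ (k+1) hk1 = k+1 ∧ σ (k+1) hk1 = k+1) → τ k hk = k ∧ σ k hk = k := by
    rintro k hk hlt hk1 ⟨ihτ, ihσ⟩
    have hτk : τ k hk = k := by
      have h1 : Ak (k+1) ⊆ Bk n k := (Ak_subset_Bk_iff hk).2 (Or.inr ⟨rfl, hlt⟩)
      have h2 := (hστ (k+1) hk1 k hk).1 h1
      rw [ihσ] at h2
      rcases (Ak_subset_Bk_iff (hτI k hk)).1 h2 with h | h
      · exfalso
        have h3 : τ k hk = τ (k+1) hk1 := by rw [ihτ, ← h]
        have := τinj _ _ _ _ h3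
        omega
      · omega
    refine ⟨hτk, ?_⟩
    have h1 : Ak k ⊆ Bk n k := (Ak_subset_Bk_iff hk).2 (Or.inl rfl)
    have h2 := (hστ k hk k hk).1 h1
    rw [hτk] at h2
    rcases (Ak_subset_Bk_iff hk).1 h2 with h | h
    · exact h
    · exfalso
      have h3 : σ k hk = σ (k+1) hk1 := by rw [ihσ, h.1]
      have := σinj _ _ _ _ h3
      omega
  have hfix : ∀ d k, ∀ hk : k ∈ Icc 2 (n-2), n - 2 - k ≤ d → τ k hk = k ∧ σ k hk = k := by
    intro d
    induction d with
    | zero =>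
      intro k hk hd
      have hke : k = n - 2 := by
        simp only [mem_Icc] at hk
        omega
      exact hbase k hk hke
    | succ d ih =>
      intro k hk hd
      by_cases hke : k = n - 2
      · exact hbase k hk hke
      · have hk1 : k + 1 ∈ Icc 2 (n-2) := by
          simp only [mem_Icc] at hk ⊢
          omega
        refine hstep k hk hke hk1 (ih (k+1) hk1 ?_)
        simp only [mem_Icc] at hk
        omega
  have hAfix : ∀ k, ∀ hk : k ∈ Icc 2 (n-2), (g ⟨Ak k, isCode_Ak hk⟩).1 = Ak k := by
    intro k hk
    rw [hσE k hk, (hfix (n-2-k) k hk le_rfl).2]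
  have hBfix : ∀ k, ∀ hk : k ∈ Icc 2 (n-2), (g ⟨Bk n k, isCode_Bk hk⟩).1 = Bk n k := by
    intro k hk
    rw [hτE k hk, (hfix (n-2-k) k hk le_rfl).1]
  -- conclude that g is the identity
  intro χ
  apply Subtype.ext
  ext x
  rcases x with k | k
  · rw [show (Sum.inl k : ESym) = vtx k from rfl, vtx_mem_iff_Bk (g χ).2, vtx_mem_iff_Bk χ.2]
    constructor
    · rintro ⟨hk, hs⟩
      refine ⟨hk, ?_⟩
      rw [← hBfix k hk] at hs
      exact (hsub _ _).1 hs
    · rintro ⟨hk, hs⟩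
      refine ⟨hk, ?_⟩
      rw [← hBfix k hk]
      exact (hsub _ _).2 hs
  · rw [show (Sum.inr k : ESym) = edg k from rfl, edg_mem_iff_Ak (g χ).2, edg_mem_iff_Ak χ.2]
    constructor
    · rintro ⟨hk, hs⟩
      refine ⟨hk, ?_⟩
      rw [← hAfix k hk] at hs
      exact (hsub _ _).1 hs
    · rintro ⟨hk, hs⟩
      refine ⟨hk, ?_⟩
      rw [← hAfix k hk]
      exact (hsub _ _).2 hs


/-- `Δ_n` is the unique order-reversing bijection of the lattice `K_n` of codes
onto itself. -/
theorem stmt5 (n : ℕ) (hn : 3 ≤ n)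
    (f : {χ : Finset ESym // IsCode n χ} → {χ : Finset ESym // IsCode n χ})
    (hbij : Function.Bijective f)
    (hrev : ∀ a b : {χ : Finset ESym // IsCode n χ}, a.1 ⊆ b.1 → (f b).1 ⊆ (f a).1) :
    ∀ a : {χ : Finset ESym // IsCode n χ}, (f a).1 = dual n a.1 := by
  intro a
  let d : Code n → Code n := fun c => ⟨dual n c.1, isCode_dual hn c.2⟩
  have hd_inv : Function.Involutive d := fun c => Subtype.ext (dual_dual hn c.2.1)
  have hgbij : Function.Bijective (d ∘ f) := hd_inv.bijective.comp hbij
  have hgm : ∀ a b : Code n, a.1 ⊆ b.1 → ((d ∘ f) a).1 ⊆ ((d ∘ f) b).1 :=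
    fun a b hab => dual_anti (hrev a b hab)
  have hid := auto_id (d ∘ f) hgbij hgm a
  have h2 : f a = d a := by
    calc f a = d (d (f a)) := (hd_inv (f a)).symm
    _ = d a := by rw [show d (f a) = a from hid]
  rw [h2]
end

section
/- For every n ≥ 3, the number of self-dual codes of Enriques diagrams of complexity n (i.e., codes χ with Δ_n(χ) = χ) is the Fibonacci number F_{n-2}. -/
def pth (n j : ℕ) : ℕ := if j % 2 = 0 then n - 2 - j / 2 else 2 + j / 2

lemma pth_even {n j : ℕ} (h : j % 2 = 0) : pth n j = n - 2 - j / 2 := by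
  simp only [pth, if_pos h]

lemma pth_odd {n j : ℕ} (h : j % 2 = 1) : pth n j = 2 + j / 2 := by
  simp only [pth]; rw [if_neg (by omega)]

lemma pth_mem {n j : ℕ} (h4 : 4 ≤ n) (hj : j ≤ n - 4) : 2 ≤ pth n j ∧ pth n j ≤ n - 2 := by
  rcases Nat.mod_two_eq_zero_or_one j with h | h
  · rw [pth_even h]; omega
  · rw [pth_odd h]; omega

lemma pth_inj {n j k : ℕ} (h4 : 4 ≤ n) (hj : j ≤ n - 4) (hk : k ≤ n - 4)
    (h : pth n j = pth n k) : j = k := by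
  rcases Nat.mod_two_eq_zero_or_one j with h1 | h1 <;>
    rcases Nat.mod_two_eq_zero_or_one k with h2 | h2
  · rw [pth_even h1, pth_even h2] at h; omega
  · rw [pth_even h1, pth_odd h2] at h; omega
  · rw [pth_odd h1, pth_even h2] at h; omega
  · rw [pth_odd h1, pth_odd h2] at h; omega

lemma pth_surj {n k : ℕ} (h4 : 4 ≤ n) (hk2 : 2 ≤ k) (hkn : k ≤ n - 2) :
    ∃ j ≤ n - 4, pth n j = k := by
  rcases le_or_gt n (2 * k) with h | h
  · exact ⟨2 * (n - 2 - k), by omega, by simp only [pth]; rw [if_pos (by omega)]; omega⟩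
  · exact ⟨2 * (k - 2) + 1, by omega, by simp only [pth]; rw [if_neg (by omega)]; omega⟩

lemma pth_succ_even {n j : ℕ} (hj : j + 1 ≤ n - 4) (h : j % 2 = 0) :
    pth n (j + 1) = n - pth n j := by
  rw [pth_odd (by omega), pth_even h]; omega

lemma pth_succ_odd {n j : ℕ} (hj : j + 1 ≤ n - 4) (h : j % 2 = 1) :
    pth n (j + 1) = n - 1 - pth n j := by
  rw [pth_even (by omega), pth_odd h]; omega

lemma pth_pred_odd {n j : ℕ} (h4 : 4 ≤ n) (hj : j ≤ n - 4) (h : j % 2 = 1) :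
    n - pth n j = pth n (j - 1) := by
  rw [pth_odd h, pth_even (by omega)]; omega

lemma pth_pred_even {n j : ℕ} (h4 : 4 ≤ n) (hj : j ≤ n - 4) (h : j % 2 = 0) (h2 : 2 ≤ j) :
    n - 1 - pth n j = pth n (j - 1) := by
  rw [pth_even h, pth_odd (by omega)]; omega

lemma pth_last {n : ℕ} (h4 : 4 ≤ n) :
    n - pth n (n - 4) = pth n (n - 4) ∨ n - 1 - pth n (n - 4) = pth n (n - 4) := by
  rcases Nat.mod_two_eq_zero_or_one (n - 4) with h | h
  · left; rw [pth_even h]; omega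
  · right; rw [pth_odd h]; omega

lemma cardB (n : ℕ) (hn : 3 ≤ n) :
    ((Finset.Icc 2 (n - 2)).powerset.filter
      (fun A => ∀ i ∈ A, (n - i) ∉ A ∧ (n - 1 - i) ∉ A)).card =
    ((Finset.range (n - 4)).powerset.filter (fun B => ∀ j ∈ B, j + 1 ∉ B)).card := by
  apply Finset.card_nbij' (fun A => (Finset.range (n - 4)).filter (fun j => pth n j ∈ A))
    (fun B => B.image (pth n))
  · -- forward
    intro A hA
    simp only [Finset.mem_coe, Finset.mem_filter, Finset.mem_powerset] at hA
    obtain ⟨hsub, hgood⟩ := hA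
    simp only [Finset.mem_coe, Finset.mem_filter, Finset.mem_powerset]
    refine ⟨Finset.filter_subset _ _, ?_⟩
    intro j hj
    simp only [Finset.mem_filter, Finset.mem_range] at hj ⊢
    rintro ⟨hj1, hpA⟩
    rcases Nat.mod_two_eq_zero_or_one j with h | h
    · rw [pth_succ_even (by omega) h] at hpA
      exact (hgood (pth n j) hj.2).1 hpA
    · rw [pth_succ_odd (by omega) h] at hpA
      exact (hgood (pth n j) hj.2).2 hpA
  · -- backward
    intro B hB
    simp only [Finset.mem_coe, Finset.mem_filter, Finset.mem_powerset] at hB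
    obtain ⟨hsub, hnc⟩ := hB
    have hr : ∀ j ∈ B, j < n - 4 := by
      intro j hj; have := hsub hj; simpa using this
    simp only [Finset.mem_coe, Finset.mem_filter, Finset.mem_powerset]
    constructor
    · intro x hx
      simp only [Finset.mem_image] at hx
      obtain ⟨j, hj, rfl⟩ := hx
      have h4 : 4 ≤ n := by have := hr j hj; omega
      have := pth_mem h4 (le_of_lt (hr j hj))
      simp only [Finset.mem_Icc]; omega
    · intro i hi
      simp only [Finset.mem_image] at hi
      obtain ⟨j, hj, rfl⟩ := hi
      have hjlt := hr j hj
      have h4 : 4 ≤ n := by omega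
      constructor
      · intro hx
        simp only [Finset.mem_image] at hx
        obtain ⟨j', hj', heq⟩ := hx
        rcases Nat.mod_two_eq_zero_or_one j with h | h
        · rw [← pth_succ_even (by omega) h] at heq
          have : j' = j + 1 := pth_inj h4 (le_of_lt (hr j' hj')) (by omega) heq
          exact hnc j hj (this ▸ hj')
        · rw [pth_pred_odd h4 (by omega) h] at heq
          have : j' = j - 1 := pth_inj h4 (le_of_lt (hr j' hj')) (by omega) heq
          have hj1 : j - 1 ∈ B := this ▸ hj'
          have := hnc (j - 1) hj1
          rw [show j - 1 + 1 = j by omega] at this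
          exact this hj
      · intro hx
        simp only [Finset.mem_image] at hx
        obtain ⟨j', hj', heq⟩ := hx
        rcases Nat.mod_two_eq_zero_or_one j with h | h
        · rcases Nat.eq_zero_or_pos j with h0 | h0
          · subst h0
            rw [pth_even h] at heq
            have := pth_mem h4 (le_of_lt (hr j' hj'))
            omega
          · rw [pth_pred_even h4 (by omega) h (by omega)] at heq
            have : j' = j - 1 := pth_inj h4 (le_of_lt (hr j' hj')) (by omega) heq
            have hj1 : j - 1 ∈ B := this ▸ hj'
            have := hnc (j - 1) hj1
            rw [show j - 1 + 1 = j by omega] at this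
            exact this hj
        · rw [← pth_succ_odd (by omega) h] at heq
          have : j' = j + 1 := pth_inj h4 (le_of_lt (hr j' hj')) (by omega) heq
          exact hnc j hj (this ▸ hj')
  · -- left inverse : g (f A) = A
    intro A hA
    simp only [Finset.mem_coe, Finset.mem_filter, Finset.mem_powerset] at hA
    obtain ⟨hsub, hgood⟩ := hA
    ext x
    simp only [Finset.mem_image, Finset.mem_filter, Finset.mem_range]
    constructor
    · rintro ⟨j, ⟨_, hpA⟩, rfl⟩
      exact hpA
    · intro hx
      have hb : 2 ≤ x ∧ x ≤ n - 2 := by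
        have := hsub hx; simpa [Finset.mem_Icc] using this
      have h4 : 4 ≤ n := by omega
      obtain ⟨j, hj, hpj⟩ := pth_surj h4 hb.1 hb.2
      refine ⟨j, ⟨?_, hpj ▸ hx⟩, hpj⟩
      rcases eq_or_lt_of_le hj with h | h
      · exfalso
        subst h
        rcases pth_last h4 with hl | hl
        · exact (hgood x hx).1 (by rw [← hpj, hl, hpj]; exact hx)
        · exact (hgood x hx).2 (by rw [← hpj, hl, hpj]; exact hx)
      · exact h
  · -- right inverse : f (g B) = B
    intro B hB
    simp only [Finset.mem_coe, Finset.mem_filter, Finset.mem_powerset] at hB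
    obtain ⟨hsub, hnc⟩ := hB
    have hr : ∀ j ∈ B, j < n - 4 := by
      intro j hj; have := hsub hj; simpa using this
    ext j
    simp only [Finset.mem_filter, Finset.mem_range, Finset.mem_image]
    constructor
    · rintro ⟨hj1, j', hj', heq⟩
      have h4 : 4 ≤ n := by omega
      have : j' = j := pth_inj h4 (le_of_lt (hr j' hj')) (by omega) heq
      exact this ▸ hj'
    · intro hj
      exact ⟨hr j hj, j, hj, rfl⟩

lemma fib_count : ∀ k : ℕ,
    ((Finset.range k).powerset.filter (fun B => ∀ i ∈ B, i + 1 ∉ B)).card = Nat.fib (k + 2)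
  | 0 => by decide
  | 1 => by decide
  | (k + 2) => by
    have h1 := fib_count k
    have h2 := fib_count (k + 1)
    have hsplit : ((Finset.range (k+2)).powerset.filter (fun B => ∀ i ∈ B, i + 1 ∉ B)).card
        = (((Finset.range (k+2)).powerset.filter (fun B => ∀ i ∈ B, i + 1 ∉ B)).filter
            (fun B => (k+1) ∈ B)).card
        + (((Finset.range (k+2)).powerset.filter (fun B => ∀ i ∈ B, i + 1 ∉ B)).filter
            (fun B => (k+1) ∉ B)).card := by
      rw [Finset.card_filter_add_card_filter_not]
    rw [hsplit]
    have hno : ((Finset.range (k+2)).powerset.filter (fun B => ∀ i ∈ B, i + 1 ∉ B)).filter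
        (fun B => (k+1) ∉ B)
        = (Finset.range (k+1)).powerset.filter (fun B => ∀ i ∈ B, i + 1 ∉ B) := by
      ext B
      simp only [Finset.mem_coe, Finset.mem_filter, Finset.mem_powerset]
      constructor
      · rintro ⟨⟨hB, hc⟩, hk⟩
        refine ⟨fun x hx => ?_, hc⟩
        have := hB hx
        simp only [Finset.mem_range] at this ⊢
        rcases Nat.lt_succ_iff_lt_or_eq.mp this with h | h
        · exact h
        · exact absurd (h ▸ hx) hk
      · rintro ⟨hB, hc⟩
        refine ⟨⟨hB.trans (by intro x; simp; omega), hc⟩, fun hk => ?_⟩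
        have := hB hk; simp at this
    have hyes : (((Finset.range (k+2)).powerset.filter (fun B => ∀ i ∈ B, i + 1 ∉ B)).filter
        (fun B => (k+1) ∈ B)).card
        = ((Finset.range k).powerset.filter (fun B => ∀ i ∈ B, i + 1 ∉ B)).card := by
      apply Finset.card_nbij' (fun B => B.erase (k+1)) (fun B => insert (k+1) B)
      · intro B hB
        simp only [Finset.mem_coe, Finset.mem_filter, Finset.mem_powerset] at hB ⊢
        obtain ⟨⟨hB, hc⟩, hk⟩ := hB
        constructor
        · intro x hx
          simp only [Finset.mem_erase] at hx
          have := hB hx.2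
          simp only [Finset.mem_range] at this ⊢
          -- x ≠ k+1, x < k+2, and x ≠ k since x = k would give k+1 ∈ B contradiction? no:
          -- x = k ∈ B → k+1 ∉ B but k+1 ∈ B, contradiction
          rcases Nat.lt_or_ge x k with h | h
          · exact h
          · exfalso
            have hxk : x = k := by omega
            exact hc x hx.2 (by rw [hxk]; exact hk)
        · intro i hi
          simp only [Finset.mem_erase] at hi ⊢
          rintro ⟨h1', h2'⟩
          exact hc i hi.2 h2'
      · intro B hB
        simp only [Finset.mem_coe, Finset.mem_filter, Finset.mem_powerset] at hB ⊢
        obtain ⟨hB, hc⟩ := hB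
        refine ⟨⟨?_, ?_⟩, Finset.mem_insert_self _ _⟩
        · intro x hx
          simp only [Finset.mem_insert] at hx
          simp only [Finset.mem_range]
          rcases hx with h | h
          · omega
          · have := hB h; simp at this; omega
        · intro i hi
          simp only [Finset.mem_insert] at hi ⊢
          rintro (h | h)
          · rcases hi with h' | h'
            · omega
            · have := hB h'; simp at this; omega
          · rcases hi with h' | h'
            · have := hB h; simp at this; omega
            · exact hc i h' h
      · intro B hB
        simp only [Finset.mem_coe, Finset.mem_filter] at hB
        dsimp only
        rw [Finset.insert_erase hB.2]
      · intro B hB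
        simp only [Finset.mem_coe, Finset.mem_filter, Finset.mem_powerset] at hB
        dsimp only
        rw [Finset.erase_insert]
        intro h
        have := hB.1 h; simp at this
    rw [hno, hyes, h1, h2]
    have e1 : Nat.fib (k+2+2) = Nat.fib (k+2) + Nat.fib (k+2+1) := Nat.fib_add_two
    have e2 : Nat.fib (k+2+1) = Nat.fib (k+1+2) := by rw [show k+2+1 = k+1+2 by omega]
    omega

lemma mem_symbols_vtx {n k : ℕ} : vtx k ∈ symbols n ↔ 2 ≤ k ∧ k ≤ n - 2 := by
  simp [symbols, vtx, edg]

lemma mem_symbols_edg {n k : ℕ} : edg k ∈ symbols n ↔ 2 ≤ k ∧ k ≤ n - 2 := by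
  simp [symbols, vtx, edg]

lemma mem_dual_vtx {n k : ℕ} {χ : Finset ESym} :
    vtx k ∈ dual n χ ↔ (2 ≤ k ∧ k ≤ n - 2) ∧ edg (n - k) ∉ χ := by
  simp only [dual, Finset.mem_union, Finset.mem_image, Finset.mem_filter, Finset.mem_Icc]; simp [vtx, edg, and_assoc]

lemma mem_dual_edg {n k : ℕ} {χ : Finset ESym} :
    edg k ∈ dual n χ ↔ (2 ≤ k ∧ k ≤ n - 2) ∧ vtx (n - k) ∉ χ := by
  simp only [dual, Finset.mem_union, Finset.mem_image, Finset.mem_filter, Finset.mem_Icc]; simp [vtx, edg, and_assoc]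

lemma cardA (n : ℕ) :
    ((symbols n).powerset.filter (fun χ => IsCode n χ ∧ dual n χ = χ)).card =
    ((Finset.Icc 2 (n - 2)).powerset.filter
      (fun A => ∀ i ∈ A, (n - i) ∉ A ∧ (n - 1 - i) ∉ A)).card := by
  apply Finset.card_nbij' (fun χ => (Finset.Icc 2 (n - 2)).filter (fun k => vtx k ∈ χ))
    (fun A => A.image vtx ∪ ((Finset.Icc 2 (n - 2)).filter (fun k => (n - k) ∉ A)).image edg)
  · -- forward maps into target
    intro χ hχ
    simp only [Finset.mem_coe, Finset.mem_filter, Finset.mem_powerset] at hχ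
    obtain ⟨hsub, ⟨hcsub, hcode⟩, hdual⟩ := hχ
    have he : ∀ k, edg k ∈ χ ↔ (2 ≤ k ∧ k ≤ n - 2) ∧ vtx (n - k) ∉ χ := by
      intro k; conv_lhs => rw [← hdual]
      exact mem_dual_edg
    simp only [Finset.mem_coe, Finset.mem_filter, Finset.mem_powerset]
    refine ⟨Finset.filter_subset _ _, ?_⟩
    intro i hi
    simp only [Finset.mem_filter, Finset.mem_Icc] at hi
    obtain ⟨⟨hi2, hin⟩, hvi⟩ := hi
    obtain ⟨hei, hnext⟩ := hcode i (by simp [Finset.mem_Icc]; omega) hvi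
    constructor
    · simp only [Finset.mem_filter, Finset.mem_Icc]
      rintro ⟨-, hvni⟩
      exact ((he i).mp hei).2 hvni
    · simp only [Finset.mem_filter, Finset.mem_Icc]
      rintro ⟨hb, hvn1⟩
      rcases hnext with hnext | hnext
      · have := ((he (i + 1)).mp hnext).2
        rw [show n - (i + 1) = n - 1 - i by omega] at this
        exact this hvn1
      · omega
  · -- backward maps into source
    intro A hA
    simp only [Finset.mem_coe, Finset.mem_filter, Finset.mem_powerset] at hA
    obtain ⟨hsub, hgood⟩ := hA
    have hmem : ∀ k, k ∈ A → 2 ≤ k ∧ k ≤ n - 2 := by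
      intro k hk; have := hsub hk; simpa [Finset.mem_Icc] using this
    have hgv : ∀ k, vtx k ∈ A.image vtx ∪
        ((Finset.Icc 2 (n - 2)).filter (fun k => (n - k) ∉ A)).image edg ↔ k ∈ A := by
      intro k; simp [vtx, edg]
    have hge : ∀ k, edg k ∈ A.image vtx ∪
        ((Finset.Icc 2 (n - 2)).filter (fun k => (n - k) ∉ A)).image edg ↔
        (2 ≤ k ∧ k ≤ n - 2) ∧ n - k ∉ A := by
      intro k; simp [vtx, edg, and_assoc]
    simp only [Finset.mem_coe, Finset.mem_filter, Finset.mem_powerset]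
    refine ⟨?_, ⟨?_, ?_⟩, ?_⟩
    · intro x hx
      rcases x with k | k
      · have : k ∈ A := (hgv k).mp hx
        exact mem_symbols_vtx.mpr (hmem k this)
      · have := (hge k).mp hx
        exact mem_symbols_edg.mpr this.1
    · intro x hx
      rcases x with k | k
      · have : k ∈ A := (hgv k).mp hx
        exact mem_symbols_vtx.mpr (hmem k this)
      · have := (hge k).mp hx
        exact mem_symbols_edg.mpr this.1
    · intro i hi hvi
      simp only [Finset.mem_Icc] at hi
      have hiA : i ∈ A := (hgv i).mp hvi
      obtain ⟨hni, hn1i⟩ := hgood i hiA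
      constructor
      · exact (hge i).mpr ⟨hi, hni⟩
      · rcases eq_or_lt_of_le hi.2 with h | h
        · right; exact h
        · left
          refine (hge (i + 1)).mpr ⟨⟨by omega, by omega⟩, ?_⟩
          rw [show n - (i + 1) = n - 1 - i by omega]
          exact hn1i
    · ext x
      rcases x with k | k
      · rw [show (Sum.inl k : ESym) = vtx k from rfl, mem_dual_vtx, hgv k]
        constructor
        · rintro ⟨⟨hk2, hkn⟩, hek⟩
          by_contra hkA
          apply hek
          refine (hge (n - k)).mpr ⟨⟨by omega, by omega⟩, ?_⟩
          rw [show n - (n - k) = k by omega]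
          exact hkA
        · intro hkA
          obtain ⟨hk2, hkn⟩ := hmem k hkA
          refine ⟨⟨hk2, hkn⟩, ?_⟩
          rw [hge (n - k)]
          rintro ⟨-, hx⟩
          rw [show n - (n - k) = k by omega] at hx
          exact hx hkA
      · rw [show (Sum.inr k : ESym) = edg k from rfl, mem_dual_edg, hge k]
        constructor
        · rintro ⟨hb, hx⟩
          exact ⟨hb, fun hkA => hx ((hgv (n - k)).mpr hkA)⟩
        · rintro ⟨hb, hx⟩
          exact ⟨hb, fun hkA => hx ((hgv (n - k)).mp hkA)⟩
  · -- left inverse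
    intro χ hχ
    simp only [Finset.mem_coe, Finset.mem_filter, Finset.mem_powerset] at hχ
    obtain ⟨hsub, ⟨hcsub, hcode⟩, hdual⟩ := hχ
    have he : ∀ k, edg k ∈ χ ↔ (2 ≤ k ∧ k ≤ n - 2) ∧ vtx (n - k) ∉ χ := by
      intro k; conv_lhs => rw [← hdual]
      exact mem_dual_edg
    ext x
    rcases x with k | k
    · show vtx k ∈ _ ↔ _
      simp only [Finset.mem_union, Finset.mem_image, Finset.mem_filter, Finset.mem_Icc]
      constructor
      · rintro (⟨a, ⟨_, ha⟩, hv⟩ | ⟨a, _, hab⟩)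
        · obtain rfl : a = k := by simpa [vtx] using hv
          exact ha
        · exact absurd hab (by simp [vtx, edg])
      · intro hk
        left
        refine ⟨k, ⟨?_, hk⟩, rfl⟩
        have : vtx k ∈ symbols n := hsub hk
        rw [mem_symbols_vtx] at this
        omega
    · show edg k ∈ _ ↔ _
      simp only [Finset.mem_union, Finset.mem_image, Finset.mem_filter, Finset.mem_Icc]
      constructor
      · rintro (⟨a, _, hab⟩ | ⟨a, ⟨⟨ha2, han⟩, hna⟩, hv⟩)
        · exact absurd hab (by simp [vtx, edg])
        · obtain rfl : a = k := by simpa [edg] using hv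
          refine (he a).mpr ⟨⟨ha2, han⟩, ?_⟩
          intro hv'
          exact hna ⟨⟨by omega, by omega⟩, hv'⟩
      · intro hk
        right
        obtain ⟨⟨hk2, hkn⟩, hv⟩ := (he k).mp hk
        refine ⟨k, ⟨⟨hk2, hkn⟩, ?_⟩, rfl⟩
        rintro ⟨-, hvv⟩
        exact hv hvv
  · -- right inverse
    intro A hA
    simp only [Finset.mem_coe, Finset.mem_filter, Finset.mem_powerset] at hA
    obtain ⟨hsub, hgood⟩ := hA
    ext k
    simp only [Finset.mem_filter, Finset.mem_Icc, Finset.mem_union, Finset.mem_image]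
    constructor
    · rintro ⟨hb, (⟨a, ha, hv⟩ | ⟨a, ha, hv⟩)⟩
      · have : a = k := by simpa [vtx] using hv
        exact this ▸ ha
      · exact absurd hv (by simp [vtx, edg])
    · intro hk
      have hb := hsub hk
      simp only [Finset.mem_Icc] at hb
      exact ⟨hb, Or.inl ⟨k, hk, rfl⟩⟩

/-- For `n ≥ 3`, the number of self-dual codes of complexity `n` is the
Fibonacci number `F_{n-2}`. -/
theorem stmt6 (n : ℕ) (hn : 3 ≤ n) :
    ((symbols n).powerset.filter (fun χ => IsCode n χ ∧ dual n χ = χ)).card =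
      Nat.fib (n - 2) := by
  rw [cardA, cardB n hn, fib_count]
  rcases eq_or_lt_of_le hn with h | h
  · rw [← h]; norm_num
  · congr 1
    omega
end
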